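/- Let $\varphi_1 = T^4$ and $\varphi_2 = T^6 + \sum_{i \ge 7} a_i T^i$ in $\mathbb{C}[[T]]$ with $a_i \in \mathbb{C}$, let $\Gamma$ be the value semigroup and $\Lambda$ the value set of differentials of $(\varphi_1, \varphi_2)$, and assume that $\Gamma = \langle 4, 6, v_2 \rangle$ for some odd integer $v_2 > 12$. Then $\Lambda \setminus \Gamma = \{v_2 - 2,\ v_2 + 2\}$. -/

import Mathlib

open PowerSeries

/-- Substitution of two one-variable power series (with zero constant term) into a
two-variable power series, defined coefficientwise. -/
noncomputable def sub2 (φ₁ φ₂ : PowerSeries ℂ) (h : MvPowerSeries (Fin 2) ℂ) :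
    PowerSeries ℂ :=
  PowerSeries.mk fun n =>
    ∑ p ∈ Finset.range (n + 1) ×ˢ Finset.range (n + 1),
      MvPowerSeries.coeff (Finsupp.single 0 p.1 + Finsupp.single 1 p.2) h *
        PowerSeries.coeff n (φ₁ ^ p.1 * φ₂ ^ p.2)

/-- The value semigroup of a parameterization `(φ₁, φ₂)`. -/
noncomputable def valueSemigroup (φ₁ φ₂ : PowerSeries ℂ) : Set ℕ :=
  {n : ℕ | ∃ h : MvPowerSeries (Fin 2) ℂ,
    sub2 φ₁ φ₂ h ≠ 0 ∧ (sub2 φ₁ φ₂ h).order = (n : ℕ∞)}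

/-- The value set of differentials of a parameterization `(φ₁, φ₂)`. -/
noncomputable def diffValues (φ₁ φ₂ : PowerSeries ℂ) : Set ℕ :=
  {n : ℕ | ∃ A B : MvPowerSeries (Fin 2) ℂ,
    sub2 φ₁ φ₂ A * derivativeFun φ₁ + sub2 φ₁ φ₂ B * derivativeFun φ₂ ≠ 0 ∧
    (sub2 φ₁ φ₂ A * derivativeFun φ₁ + sub2 φ₁ φ₂ B * derivativeFun φ₂).order + 1
      = (n : ℕ∞)}

namespace LamGam

open Finset

variable {φ₂ : PowerSeries ℂ} {o : ℕ}

/-- Hypotheses on the second series. -/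
structure Hyp (φ₂ : PowerSeries ℂ) (o : ℕ) : Prop where
  h6 : PowerSeries.coeff 6 φ₂ = 1
  hlow : ∀ n < 6, PowerSeries.coeff n φ₂ = 0
  hlowodd : ∀ n < o, Odd n → PowerSeries.coeff n φ₂ = 0

theorem Hyp.oddlow (H : Hyp φ₂ o) {n : ℕ} (h : n < o) (hn : Odd n) :
    PowerSeries.coeff n φ₂ = 0 := H.hlowodd n h hn

theorem pow2_lt (H : Hyp φ₂ o) : ∀ (j n : ℕ), n < 6*j → PowerSeries.coeff n (φ₂^j) = 0 := by
  intro j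
  induction j with
  | zero => intro n hn; omega
  | succ j ih =>
    intro n hn
    rw [pow_succ, PowerSeries.coeff_mul]
    apply Finset.sum_eq_zero
    rintro ⟨p, q⟩ hpq
    rw [Finset.HasAntidiagonal.mem_antidiagonal] at hpq
    rcases lt_or_ge p (6*j) with hp | hp
    · rw [ih p hp, zero_mul]
    · rw [H.hlow q (by omega), mul_zero]

theorem pow2_eq (H : Hyp φ₂ o) (j : ℕ) : PowerSeries.coeff (6*j) (φ₂^j) = 1 := by
  induction j with
  | zero => simp
  | succ j ih =>
    rw [pow_succ, PowerSeries.coeff_mul]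
    rw [Finset.sum_eq_single (6*j, 6)]
    · rw [ih, H.h6, one_mul]
    · rintro ⟨p, q⟩ hpq hne
      rw [Finset.HasAntidiagonal.mem_antidiagonal] at hpq
      rcases lt_or_ge p (6*j) with hp | hp
      · rw [pow2_lt H j p hp, zero_mul]
      · have hq : q < 6 := by
          rcases lt_or_ge q 6 with h | h
          · exact h
          · exfalso; apply hne; have : p = 6*j := by omega
            have : q = 6 := by omega
            simp_all
        rw [H.hlow q hq, mul_zero]
    · intro h; exfalso; exact h (Finset.HasAntidiagonal.mem_antidiagonal.2 (by omega))

/-- the basic monomial in the image -/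
theorem mon_lt (H : Hyp φ₂ o) {i j n : ℕ} (hn : n < 4*i + 6*j) :
    PowerSeries.coeff n (((X:PowerSeries ℂ)^4)^i * φ₂^j) = 0 := by
  rw [← pow_mul, PowerSeries.coeff_X_pow_mul']
  split_ifs with h
  · exact pow2_lt H j _ (by omega)
  · rfl

theorem mon_eq (H : Hyp φ₂ o) (i j : ℕ) :
    PowerSeries.coeff (4*i + 6*j) (((X:PowerSeries ℂ)^4)^i * φ₂^j) = 1 := by
  rw [← pow_mul, PowerSeries.coeff_X_pow_mul']
  rw [if_pos (by omega)]
  have : 4*i + 6*j - 4*i = 6*j := by omega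
  rw [this, pow2_eq H]

theorem xpow_odd {i n : ℕ} (hn : Odd n) :
    PowerSeries.coeff n ((X:PowerSeries ℂ)^(4*i)) = 0 := by
  rw [PowerSeries.coeff_X_pow, if_neg]
  rintro rfl
  rcases hn with ⟨k, hk⟩; omega

theorem mon_odd0 {i n : ℕ} (hn : Odd n) :
    PowerSeries.coeff n (((X:PowerSeries ℂ)^4)^i * φ₂^0) = 0 := by
  rw [pow_zero, mul_one, ← pow_mul]
  exact xpow_odd hn

theorem mon_odd1 (H : Hyp φ₂ o) : ∀ (j : ℕ), 1 ≤ j → ∀ (i n : ℕ), Odd n →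
    n + 6 < 4*i + 6*j + o →
    PowerSeries.coeff n (((X:PowerSeries ℂ)^4)^i * φ₂^j) = 0 := by
  intro j
  induction j with
  | zero => omega
  | succ j ih =>
    intro _ i n hn hlt
    rcases Nat.eq_zero_or_pos j with rfl | hj
    · -- j = 0 : coefficient of x^i * φ₂
      rw [pow_one, ← pow_mul, PowerSeries.coeff_X_pow_mul']
      split_ifs with h
      · have hodd : Odd (n - 4*i) := by
          rcases hn with ⟨k, hk⟩
          exact ⟨k - 2*i, by omega⟩
        exact H.oddlow (by omega) hodd
      · rfl
    · rw [pow_succ φ₂ j, ← mul_assoc, PowerSeries.coeff_mul]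
      apply Finset.sum_eq_zero
      rintro ⟨p, q⟩ hpq
      rw [Finset.HasAntidiagonal.mem_antidiagonal] at hpq
      rcases Nat.even_or_odd q with hq | hq
      · -- q even, so p odd
        have hp : Odd p := by
          rcases hn with ⟨k, hk⟩; rcases hq with ⟨m, hm⟩
          exact ⟨k - m, by omega⟩
        rcases lt_or_ge (p + 6) (4*i + 6*j + o) with h | h
        · rw [ih hj i p hp h, zero_mul]
        · rw [H.hlow q (by omega), mul_zero]
      · rcases lt_or_ge q o with h | h
        · rw [H.oddlow h hq, mul_zero]
        · rw [mon_lt H (show p < 4*i + 6*j by omega), zero_mul]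


theorem coeff_sub2 (φ₁ φ₂ : PowerSeries ℂ) (h : MvPowerSeries (Fin 2) ℂ) (n : ℕ) :
    PowerSeries.coeff n (sub2 φ₁ φ₂ h) =
    ∑ p ∈ Finset.range (n + 1) ×ˢ Finset.range (n + 1),
      MvPowerSeries.coeff (Finsupp.single 0 p.1 + Finsupp.single 1 p.2) h *
        PowerSeries.coeff n (φ₁ ^ p.1 * φ₂ ^ p.2) := by
  rw [sub2, PowerSeries.coeff_mk]

theorem ind_inj {p1 p2 i j : ℕ} :
    (Finsupp.single (0 : Fin 2) p1 + Finsupp.single 1 p2 = Finsupp.single 0 i + Finsupp.single 1 j)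
    ↔ (p1 = i ∧ p2 = j) := by
  constructor
  · intro h
    have h0 := DFunLike.congr_fun h 0
    have h1 := DFunLike.congr_fun h 1
    simp [Finsupp.single_apply] at h0 h1
    exact ⟨h0, h1⟩
  · rintro ⟨rfl, rfl⟩; rfl

theorem sub2_add (φ₁ φ₂ : PowerSeries ℂ) (h₁ h₂ : MvPowerSeries (Fin 2) ℂ) :
    sub2 φ₁ φ₂ (h₁ + h₂) = sub2 φ₁ φ₂ h₁ + sub2 φ₁ φ₂ h₂ := by
  ext n
  simp only [coeff_sub2, map_add, add_mul, Finset.sum_add_distrib]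

theorem sub2_sub (φ₁ φ₂ : PowerSeries ℂ) (h₁ h₂ : MvPowerSeries (Fin 2) ℂ) :
    sub2 φ₁ φ₂ (h₁ - h₂) = sub2 φ₁ φ₂ h₁ - sub2 φ₁ φ₂ h₂ := by
  ext n
  simp only [coeff_sub2, map_sub, sub_mul, Finset.sum_sub_distrib]

theorem sub2_smul (φ₁ φ₂ : PowerSeries ℂ) (c : ℂ) (h : MvPowerSeries (Fin 2) ℂ) :
    sub2 φ₁ φ₂ (c • h) = c • sub2 φ₁ φ₂ h := by
  ext n
  simp only [coeff_sub2, MvPowerSeries.coeff_smul, PowerSeries.coeff_smul, smul_eq_mul,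
    Finset.mul_sum, mul_assoc]


/-- the monomial `c X^i Y^j` as a 2-variable power series -/
noncomputable def M (i j : ℕ) (c : ℂ) : MvPowerSeries (Fin 2) ℂ :=
  MvPowerSeries.monomial (Finsupp.single 0 i + Finsupp.single 1 j) c

theorem sub2_M (H : Hyp φ₂ o) (i j : ℕ) (c : ℂ) :
    sub2 ((X:PowerSeries ℂ)^4) φ₂ (M i j c) = c • (((X:PowerSeries ℂ)^4)^i * φ₂^j) := by
  ext n
  rw [coeff_sub2, PowerSeries.coeff_smul, smul_eq_mul]
  have : ∀ p ∈ Finset.range (n + 1) ×ˢ Finset.range (n + 1),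
      MvPowerSeries.coeff (Finsupp.single 0 p.1 + Finsupp.single 1 p.2) (M i j c) *
        PowerSeries.coeff n (((X:PowerSeries ℂ)^4) ^ p.1 * φ₂ ^ p.2) =
      if p = (i, j) then
        c * PowerSeries.coeff n (((X:PowerSeries ℂ)^4) ^ p.1 * φ₂ ^ p.2) else 0 := by
    rintro ⟨p1, p2⟩ _
    rw [M, MvPowerSeries.coeff_monomial]
    by_cases h : (p1, p2) = (i, j)
    · obtain ⟨rfl, rfl⟩ := Prod.mk.injEq .. ▸ h
      simp
    · rw [if_neg h, if_neg, zero_mul]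
      rw [ind_inj]
      rintro ⟨rfl, rfl⟩; exact h rfl
  rw [Finset.sum_congr rfl this, Finset.sum_ite_eq']
  split_ifs with h
  · rfl
  · rw [Finset.mem_product, Finset.mem_range, Finset.mem_range] at h
    push_neg at h
    rcases lt_or_ge i (n+1) with hi | hi
    · rw [mon_lt H (show n < 4*i+6*j by have := h (by omega); omega), mul_zero]
    · rw [mon_lt H (show n < 4*i+6*j by omega), mul_zero]

theorem sub2_odd (H : Hyp φ₂ o) (A : MvPowerSeries (Fin 2) ℂ) {n : ℕ} (hn : Odd n) (hno : n < o) :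
    PowerSeries.coeff n (sub2 ((X:PowerSeries ℂ)^4) φ₂ A) = 0 := by
  rw [coeff_sub2]
  apply Finset.sum_eq_zero
  rintro ⟨i, j⟩ _
  rcases Nat.eq_zero_or_pos j with rfl | hj
  · rw [mon_odd0 hn, mul_zero]
  · rw [mon_odd1 H j hj i n hn (by omega), mul_zero]

theorem sub2_small (H : Hyp φ₂ o) (A : MvPowerSeries (Fin 2) ℂ) {n : ℕ} (h1 : 1 ≤ n) (h3 : n ≤ 3) :
    PowerSeries.coeff n (sub2 ((X:PowerSeries ℂ)^4) φ₂ A) = 0 := by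
  rw [coeff_sub2]
  apply Finset.sum_eq_zero
  rintro ⟨i, j⟩ _
  rcases Nat.eq_zero_or_pos (i + j) with hij | hij
  · have hi : i = 0 := by omega
    have hj : j = 0 := by omega
    subst hi; subst hj
    simp only [pow_zero, mul_one, one_mul]
    rw [PowerSeries.coeff_one, if_neg (by omega), mul_zero]
  · rw [mon_lt H (show n < 4*i + 6*j by omega), mul_zero]


theorem coeff_dFun (f : PowerSeries ℂ) (n : ℕ) :
    PowerSeries.coeff n (derivativeFun f) = PowerSeries.coeff (n+1) f * (n+1) :=
  PowerSeries.coeff_derivative f n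

theorem dX4 : derivativeFun ((X:PowerSeries ℂ)^4) = PowerSeries.C 4 * X^3 := by
  ext n
  rw [coeff_dFun, PowerSeries.coeff_C_mul_X_pow, PowerSeries.coeff_X_pow]
  by_cases h : n = 3
  · subst h; norm_num
  · rw [if_neg (by omega), if_neg h, zero_mul]

theorem coeff_mul_dX4 (f : PowerSeries ℂ) (n : ℕ) :
    PowerSeries.coeff n (f * derivativeFun ((X:PowerSeries ℂ)^4)) =
    if 3 ≤ n then 4 * PowerSeries.coeff (n-3) f else 0 := by
  rw [dX4, show f * (PowerSeries.C 4 * X^3) = PowerSeries.C 4 * (f * X^3) by ring,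
    PowerSeries.coeff_C_mul, PowerSeries.coeff_mul_X_pow']
  split_ifs <;> simp

theorem coeff_mul_dphi (g : PowerSeries ℂ) (n : ℕ) :
    PowerSeries.coeff n (g * derivativeFun φ₂) =
    ∑ p ∈ Finset.HasAntidiagonal.antidiagonal n,
      PowerSeries.coeff p.1 g * (PowerSeries.coeff (p.2+1) φ₂ * (p.2+1)) := by
  rw [PowerSeries.coeff_mul]
  exact Finset.sum_congr rfl fun p _ => by rw [coeff_dFun]

section omegaHat

variable (A B : MvPowerSeries (Fin 2) ℂ)

/-- the evaluated 1-form -/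
noncomputable def om (φ₂ : PowerSeries ℂ) (A B : MvPowerSeries (Fin 2) ℂ) : PowerSeries ℂ :=
  sub2 ((X:PowerSeries ℂ)^4) φ₂ A * derivativeFun ((X:PowerSeries ℂ)^4) +
    sub2 ((X:PowerSeries ℂ)^4) φ₂ B * derivativeFun φ₂

theorem om_coeff_even (H : Hyp φ₂ o) (hoo : Odd o)
    (hc : PowerSeries.coeff 0 (sub2 ((X:PowerSeries ℂ)^4) φ₂ B) = 0)
    {n : ℕ} (hn : Even n) (hle : n ≤ o + 1) :
    PowerSeries.coeff n (om φ₂ A B) = 0 := by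
  rw [om, map_add, coeff_mul_dX4, coeff_mul_dphi]
  have h1 : (if 3 ≤ n then 4 * PowerSeries.coeff (n-3) (sub2 ((X:PowerSeries ℂ)^4) φ₂ A)
      else 0) = 0 := by
    split_ifs with h
    · rw [sub2_odd H A (n := n-3) (by rcases hn with ⟨k,hk⟩; exact ⟨k-2, by omega⟩) (by omega),
        mul_zero]
    · rfl
  rw [h1, zero_add]
  apply Finset.sum_eq_zero
  rintro ⟨p, q⟩ hpq
  rw [Finset.HasAntidiagonal.mem_antidiagonal] at hpq
  rcases Nat.even_or_odd p with hp | hp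
  · -- p even, q even, q+1 odd
    have hq1 : Odd (q+1) := by
      rcases hn with ⟨k,hk⟩; rcases hp with ⟨m,hm⟩; exact ⟨k-m, by omega⟩
    rcases lt_or_ge (q+1) o with h | h
    · rw [H.oddlow h hq1, zero_mul, mul_zero]
    · -- p ≤ 2, p even
      have hp2 : p ≤ 2 := by omega
      rcases Nat.eq_zero_or_pos p with rfl | hpp
      · rw [hc, zero_mul]
      · rw [sub2_small H B hpp (by omega), zero_mul]
  · rcases lt_or_ge p o with h | h
    · rw [sub2_odd H B hp h, zero_mul]
    · -- p = o, q ≤ 1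
      have : q + 1 ≤ 2 := by
        rcases hp with ⟨k,hk⟩; rcases hoo with ⟨m,hm⟩; omega
      rw [H.hlow (q+1) (by omega), zero_mul, mul_zero]

theorem om_coeff_le4 (H : Hyp φ₂ o) {n : ℕ} (hn : Even n) (hle : n ≤ 4) :
    PowerSeries.coeff n (om φ₂ A B) = 0 := by
  rw [om, map_add, coeff_mul_dX4, coeff_mul_dphi]
  have h1 : (if 3 ≤ n then 4 * PowerSeries.coeff (n-3) (sub2 ((X:PowerSeries ℂ)^4) φ₂ A)
      else 0) = 0 := by
    split_ifs with h
    · have hn4 : n = 4 := by rcases hn with ⟨k, hk⟩; omega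
      rw [sub2_small H A (n := n-3) (by omega) (by omega), mul_zero]
    · rfl
  rw [h1, zero_add]
  apply Finset.sum_eq_zero
  rintro ⟨p, q⟩ hpq
  rw [Finset.HasAntidiagonal.mem_antidiagonal] at hpq
  rw [H.hlow (q+1) (by omega), zero_mul, mul_zero]

theorem om_coeff_1 (H : Hyp φ₂ o) :
    PowerSeries.coeff 1 (om φ₂ A B) = 0 := by
  rw [om, map_add, coeff_mul_dX4, coeff_mul_dphi]
  rw [if_neg (by omega), zero_add]
  apply Finset.sum_eq_zero
  rintro ⟨p, q⟩ hpq
  rw [Finset.HasAntidiagonal.mem_antidiagonal] at hpq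
  rw [H.hlow (q+1) (by omega), zero_mul, mul_zero]

theorem om_coeff_5 (H : Hyp φ₂ o) :
    PowerSeries.coeff 5 (om φ₂ A B) =
      6 * PowerSeries.coeff 0 (sub2 ((X:PowerSeries ℂ)^4) φ₂ B) := by
  rw [om, map_add, coeff_mul_dX4, coeff_mul_dphi]
  rw [if_pos (by omega), sub2_small H A (by omega) (by omega), mul_zero, zero_add]
  rw [Finset.sum_eq_single (0, 5)]
  · rw [H.h6]; push_cast; ring
  · rintro ⟨p, q⟩ hpq hne
    rw [Finset.HasAntidiagonal.mem_antidiagonal] at hpq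
    have hq : q + 1 ≤ 5 := by
      rcases Nat.eq_zero_or_pos p with rfl | hp
      · obtain rfl : q = 5 := by omega
        exact absurd rfl hne
      · omega
    rw [H.hlow (q+1) (by omega), zero_mul, mul_zero]
  · intro h; exact absurd (Finset.HasAntidiagonal.mem_antidiagonal.2 (by omega : (0:ℕ) + 5 = 5)) h

theorem om_order_even_ge (H : Hyp φ₂ o) (hoo : Odd o) {m : ℕ} (hm : Even m)
    (hord : (om φ₂ A B).order = m) : o + 3 ≤ m := by
  rw [PowerSeries.order_eq_nat] at hord
  obtain ⟨hne, hlt⟩ := hord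
  by_cases hc : PowerSeries.coeff 0 (sub2 ((X:PowerSeries ℂ)^4) φ₂ B) = 0
  · -- all even coefficients up to o+1 vanish
    by_contra hcon
    exact hne (om_coeff_even A B H hoo hc hm (by rcases hm with ⟨k,hk⟩; rcases hoo with ⟨l,hl⟩; omega))
  · -- coefficient 5 is nonzero, so order ≤ 5, even, ≤ 4: contradiction
    have h5 : PowerSeries.coeff 5 (om φ₂ A B) ≠ 0 := by
      rw [om_coeff_5 A B H]
      exact mul_ne_zero (by norm_num) hc
    have hm5 : m ≤ 5 := by
      by_contra hcon
      exact h5 (hlt 5 (by omega))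
    exact absurd (om_coeff_le4 A B H hm (by rcases hm with ⟨k,hk⟩; omega)) hne

theorem om_order_ne_one (H : Hyp φ₂ o) : (om φ₂ A B).order ≠ 1 := by
  intro h
  rw [show ((1:ℕ∞)) = ((1:ℕ):ℕ∞) by norm_num, PowerSeries.order_eq_nat] at h
  exact h.1 (om_coeff_1 A B H)

end omegaHat

theorem mem_SP (h12 : 12 < v2) (hodd2 : v2 % 2 = 1) {n : ℕ}
    (hn : n ∈ AddSubmonoid.closure ({4, 6, v2} : Set ℕ)) :
    (n % 2 = 0 ∧ n ≠ 2) ∨ (n % 2 = 1 ∧ v2 ≤ n ∧ n ≠ v2 + 2) := by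
  induction hn using AddSubmonoid.closure_induction with
  | mem x hx =>
    rcases hx with rfl | rfl | rfl
    · omega
    · omega
    · omega
  | zero => omega
  | add x y _ _ hx hy => omega

theorem rep46 {n : ℕ} (h : n % 2 = 0) (h4 : 4 ≤ n) : ∃ i j, n = 4*i + 6*j := by
  by_cases h4' : n % 4 = 0
  · exact ⟨n/4, 0, by omega⟩
  · exact ⟨(n-6)/4, 1, by omega⟩

theorem mem_closure_even {n : ℕ} (h : n % 2 = 0) (h4 : 4 ≤ n) :
    n ∈ AddSubmonoid.closure ({4, 6, v2} : Set ℕ) := by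
  obtain ⟨i, j, rfl⟩ := rep46 h h4
  have h4m : (4:ℕ) ∈ AddSubmonoid.closure ({4, 6, v2} : Set ℕ) :=
    AddSubmonoid.subset_closure (by simp)
  have h6m : (6:ℕ) ∈ AddSubmonoid.closure ({4, 6, v2} : Set ℕ) :=
    AddSubmonoid.subset_closure (by simp)
  have := AddSubmonoid.add_mem _ (nsmul_mem h4m i) (nsmul_mem h6m j)
  simpa [nsmul_eq_mul, mul_comm] using this

theorem mem_closure_odd (hodd2 : v2 % 2 = 1) {n : ℕ} (h : n % 2 = 1) (hge : v2 ≤ n) (hne : n ≠ v2 + 2) :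
    n ∈ AddSubmonoid.closure ({4, 6, v2} : Set ℕ) := by
  have hv2 : v2 ∈ AddSubmonoid.closure ({4, 6, v2} : Set ℕ) :=
    AddSubmonoid.subset_closure (by simp)
  rcases eq_or_lt_of_le hge with rfl | hlt
  · exact hv2
  · have h2 : (n - v2) % 2 = 0 := by omega
    have h4 : 4 ≤ n - v2 := by omega
    have := AddSubmonoid.add_mem _ hv2 (mem_closure_even h2 h4)
    have heq : v2 + (n - v2) = n := by omega
    rwa [heq] at this


/-- derivative of a power -/
theorem dpow (ψ : PowerSeries ℂ) (i : ℕ) :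
    derivativeFun (ψ^i) = PowerSeries.C (i:ℂ) * ψ^(i-1) * derivativeFun ψ := by
  induction i with
  | zero => simp [pow_zero, derivativeFun_one]
  | succ i ih =>
    rw [pow_succ, derivativeFun_mul, ih, smul_eq_mul, smul_eq_mul]
    rcases Nat.eq_zero_or_pos i with rfl | hi
    · simp
    · have h1 : i + 1 - 1 = i := by omega
      have h2 : ψ ^ i = ψ ^ (i-1) * ψ := by rw [← pow_succ]; congr 1; omega
      rw [h1, h2, Nat.cast_add, Nat.cast_one, map_add, map_one]
      ring

/-- the correction form: its evaluation is an exact differential -/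
theorem corr_eq (H : Hyp φ₂ o) (i j : ℕ) :
    om φ₂ (M (i-1) j (i:ℂ)) (M i (j-1) (j:ℂ)) =
      derivativeFun (((X:PowerSeries ℂ)^4)^i * φ₂^j) := by
  have e1 : derivativeFun (((X:PowerSeries ℂ)^4)^i)
      = PowerSeries.C (i:ℂ) * ((X:PowerSeries ℂ)^4)^(i-1)
        * derivativeFun ((X:PowerSeries ℂ)^4) := dpow _ i
  have e2 : derivativeFun (φ₂^j) = PowerSeries.C (j:ℂ) * φ₂^(j-1) * derivativeFun φ₂ :=
    dpow _ j
  rw [om, sub2_M H, sub2_M H, derivativeFun_mul, e1, e2,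
    smul_eq_C_mul, smul_eq_C_mul, smul_eq_mul, smul_eq_mul]
  ring

theorem coeff_corr (H : Hyp φ₂ o) (i j n : ℕ) :
    PowerSeries.coeff n (om φ₂ (M (i-1) j (i:ℂ)) (M i (j-1) (j:ℂ))) =
    PowerSeries.coeff (n+1) (((X:PowerSeries ℂ)^4)^i * φ₂^j) * (n+1) := by
  rw [corr_eq H, coeff_dFun]

/-- coefficients of the correction form vanish below the order -/
theorem coeff_corr_lt (H : Hyp φ₂ o) {i j n : ℕ} (hn : n + 1 < 4*i + 6*j) :
    PowerSeries.coeff n (om φ₂ (M (i-1) j (i:ℂ)) (M i (j-1) (j:ℂ))) = 0 := by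
  rw [coeff_corr H, mon_lt H hn, zero_mul]

theorem coeff_corr_odd (H : Hyp φ₂ o) {i j n : ℕ} (hn : Odd (n+1))
    (hlt : n + 7 < 4*i + 6*j + o) :
    PowerSeries.coeff n (om φ₂ (M (i-1) j (i:ℂ)) (M i (j-1) (j:ℂ))) = 0 := by
  rw [coeff_corr H]
  rcases Nat.eq_zero_or_pos j with rfl | hj
  · rw [mon_odd0 hn, zero_mul]
  · rw [mon_odd1 H j hj i (n+1) hn (by omega), zero_mul]

theorem coeff_corr_eq (H : Hyp φ₂ o) {i j m : ℕ} (hm : m + 1 = 4*i + 6*j) :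
    PowerSeries.coeff m (om φ₂ (M (i-1) j (i:ℂ)) (M i (j-1) (j:ℂ))) = (m+1 : ℂ) := by
  rw [coeff_corr H, hm, mon_eq H, one_mul]

/-- `om` is linear in the pair (A,B) : subtraction -/
theorem om_sub (A B A' B' : MvPowerSeries (Fin 2) ℂ) (c : ℂ) :
    om φ₂ (A - c • A') (B - c • B') = om φ₂ A B - c • om φ₂ A' B' := by
  rw [om, om, om, sub2_sub, sub2_sub, sub2_smul, sub2_smul,
    smul_eq_C_mul, smul_eq_C_mul, smul_eq_C_mul]
  ring

/-- coefficient of `(c • X^k) * derivativeFun φ₂` -/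
theorem coeff_smul_Xpow_mul_dphi (c : ℂ) (k n : ℕ) :
    PowerSeries.coeff n ((c • (X:PowerSeries ℂ)^k) * derivativeFun φ₂) =
    if k ≤ n then c * (PowerSeries.coeff (n-k+1) φ₂ * ((n-k+1 : ℕ) : ℂ)) else 0 := by
  rw [coeff_mul_dphi]
  split_ifs with h
  · rw [Finset.sum_eq_single (k, n-k)]
    · rw [PowerSeries.coeff_smul, PowerSeries.coeff_X_pow, if_pos rfl, smul_eq_mul, mul_one]
      push_cast
      ring
    · rintro ⟨p, q⟩ hpq hne
      rw [Finset.HasAntidiagonal.mem_antidiagonal] at hpq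
      rw [PowerSeries.coeff_smul, PowerSeries.coeff_X_pow, if_neg, smul_eq_mul, mul_zero, zero_mul]
      rintro rfl
      exact hne (by rw [Prod.mk.injEq]; omega)
    · intro hmem
      exact absurd (Finset.HasAntidiagonal.mem_antidiagonal.2 (by omega)) hmem
  · apply Finset.sum_eq_zero
    rintro ⟨p, q⟩ hpq
    rw [Finset.HasAntidiagonal.mem_antidiagonal] at hpq
    rw [PowerSeries.coeff_smul, PowerSeries.coeff_X_pow, if_neg (by omega), smul_eq_mul,
      mul_zero, zero_mul]

/-- the seed form, with shift `s` : `A = -3 X^s Y`, `B = 2 X^(s+1)` -/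
theorem seed_coeff (H : Hyp φ₂ o) (s : ℕ) {n : ℕ} (hn : 4*s+3 ≤ n) :
    PowerSeries.coeff n (om φ₂ (M s 1 (-3)) (M (s+1) 0 2)) =
    (2*((n:ℂ) - 4*(s:ℂ) - 3) - 12) * PowerSeries.coeff (n - (4*s+3)) φ₂ := by
  have T1 : PowerSeries.coeff n ((-3 : ℂ) • (((X:PowerSeries ℂ)^4)^s * φ₂^1) *
      derivativeFun ((X:PowerSeries ℂ)^4)) =
      if 3 ≤ n then 4 * ((-3) * (if 4*s ≤ n-3 then PowerSeries.coeff (n-3-4*s) φ₂ else 0))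
      else 0 := by
    rw [coeff_mul_dX4, PowerSeries.coeff_smul, pow_one, ← pow_mul,
      PowerSeries.coeff_X_pow_mul', smul_eq_mul]
  have T2 : PowerSeries.coeff n ((2:ℂ) • ((X:PowerSeries ℂ)^4)^(s+1) *
      derivativeFun φ₂) =
      if 4*(s+1) ≤ n then
        2 * (PowerSeries.coeff (n-4*(s+1)+1) φ₂ * ((n-4*(s+1)+1 : ℕ) : ℂ)) else 0 := by
    rw [← pow_mul]
    exact coeff_smul_Xpow_mul_dphi 2 (4*(s+1)) n
  rw [om, sub2_M H, sub2_M H, pow_zero, mul_one, map_add, T1, T2]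
  rw [if_pos (by omega : 3 ≤ n), if_pos (by omega : 4*s ≤ n - 3)]
  have e1 : n - 3 - 4*s = n - (4*s+3) := by omega
  rw [e1]
  rcases lt_or_ge n (4*(s+1)) with h | h
  · -- n = 4s+3
    have hn' : n = 4*s+3 := by omega
    rw [if_neg (by omega), add_zero, hn']
    push_cast
    ring
  · rw [if_pos h]
    have e2 : n - 4*(s+1) + 1 = n - (4*s+3) := by omega
    rw [e2, Nat.cast_sub (by omega : 4*s+3 ≤ n)]
    push_cast
    ring

/-- coefficients of the seed form below the initial order vanish -/
theorem seed_lt (H : Hyp φ₂ o) (s : ℕ) {n : ℕ} (hn : n < 4*s+3) :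
    PowerSeries.coeff n (om φ₂ (M s 1 (-3)) (M (s+1) 0 2)) = 0 := by
  have T1 : PowerSeries.coeff n ((-3 : ℂ) • (((X:PowerSeries ℂ)^4)^s * φ₂^1) *
      derivativeFun ((X:PowerSeries ℂ)^4)) =
      if 3 ≤ n then 4 * ((-3) * (if 4*s ≤ n-3 then PowerSeries.coeff (n-3-4*s) φ₂ else 0))
      else 0 := by
    rw [coeff_mul_dX4, PowerSeries.coeff_smul, pow_one, ← pow_mul,
      PowerSeries.coeff_X_pow_mul', smul_eq_mul]
  have T2 : PowerSeries.coeff n ((2:ℂ) • ((X:PowerSeries ℂ)^4)^(s+1) *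
      derivativeFun φ₂) =
      if 4*(s+1) ≤ n then
        2 * (PowerSeries.coeff (n-4*(s+1)+1) φ₂ * ((n-4*(s+1)+1 : ℕ) : ℂ)) else 0 := by
    rw [← pow_mul]
    exact coeff_smul_Xpow_mul_dphi 2 (4*(s+1)) n
  rw [om, sub2_M H, sub2_M H, pow_zero, mul_one, map_add, T1, T2]
  rw [if_neg (by omega : ¬ 4*(s+1) ≤ n), add_zero]
  split_ifs with h1 h2
  · rw [H.hlow (n-3-4*s) (by omega), mul_zero, mul_zero]
  · rw [mul_zero, mul_zero]
  · rfl

/-- the main construction, by inductively killing coefficients -/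
theorem build (H : Hyp φ₂ o) (hoo : Odd o) (ho7 : 7 ≤ o) (hao : PowerSeries.coeff o φ₂ ≠ 0)
    (s : ℕ) : ∀ m, m ≤ o + (4*s+3) → ∃ A B : MvPowerSeries (Fin 2) ℂ,
      (∀ n < m, PowerSeries.coeff n (om φ₂ A B) = 0) ∧
      (∀ n < o + (4*s+3), n % 2 = 0 → PowerSeries.coeff n (om φ₂ A B) = 0) ∧
      (∀ n < o + (4*s+3), n ≤ 4*s+10 → PowerSeries.coeff n (om φ₂ A B) = 0) ∧
      PowerSeries.coeff (o+(4*s+3)) (om φ₂ A B)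
        = (2*(o:ℂ) - 12) * PowerSeries.coeff o φ₂ := by
  have ho2 : o % 2 = 1 := Nat.odd_iff.1 hoo
  -- properties of the seed
  have S0 : ∀ n < o + (4*s+3), n % 2 = 0 →
      PowerSeries.coeff n (om φ₂ (M s 1 (-3)) (M (s+1) 0 2)) = 0 := by
    intro n hn hn2
    rcases lt_or_ge n (4*s+3) with h | h
    · exact seed_lt H s h
    · rw [seed_coeff H s h, H.oddlow (show n - (4*s+3) < o by omega)
        (Nat.odd_iff.2 (by omega)), mul_zero]
  have S1 : ∀ n < o + (4*s+3), n ≤ 4*s+10 →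
      PowerSeries.coeff n (om φ₂ (M s 1 (-3)) (M (s+1) 0 2)) = 0 := by
    intro n hn hle
    rcases lt_or_ge n (4*s+3) with h | h
    · exact seed_lt H s h
    · rw [seed_coeff H s h]
      have hk : n - (4*s+3) ≤ 7 := by omega
      rcases Nat.lt_or_ge (n - (4*s+3)) 6 with h6 | h6
      · rw [H.hlow _ h6, mul_zero]
      · rcases Nat.eq_or_lt_of_le h6 with h6' | h7
        · -- k = 6 : the factor vanishes
          have hn' : n = 4*s+9 := by omega
          subst hn'
          have : (2*(((4*s+9 : ℕ):ℂ) - 4*(s:ℂ) - 3) - 12) = 0 := by push_cast; ring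
          rw [this, zero_mul]
        · -- k = 7 < o
          rw [H.oddlow (show n - (4*s+3) < o by omega) (Nat.odd_iff.2 (by omega)), mul_zero]
  have S2 : PowerSeries.coeff (o+(4*s+3)) (om φ₂ (M s 1 (-3)) (M (s+1) 0 2))
      = (2*(o:ℂ) - 12) * PowerSeries.coeff o φ₂ := by
    rw [seed_coeff H s (by omega)]
    have e : o + (4*s+3) - (4*s+3) = o := by omega
    rw [e]
    congr 1
    push_cast; ring
  intro m
  induction m with
  | zero =>
    intro _
    exact ⟨M s 1 (-3), M (s+1) 0 2, fun n hn => absurd hn (by omega), S0, S1, S2⟩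
  | succ m ih =>
    intro hm
    obtain ⟨A, B, h1, h2, h3, h4⟩ := ih (by omega)
    by_cases hz : PowerSeries.coeff m (om φ₂ A B) = 0
    · refine ⟨A, B, fun n hn => ?_, h2, h3, h4⟩
      rcases Nat.lt_or_ge n m with h | h
      · exact h1 n h
      · have : n = m := by omega
        subst this; exact hz
    · -- m is odd, m ≥ 4s+11
      have hmodd : m % 2 = 1 := by
        by_contra hc
        exact hz (h2 m (by omega) (by omega))
      have hm11 : 4*s+11 ≤ m := by
        by_contra hc
        exact hz (h3 m (by omega) (by omega))
      obtain ⟨i, j, hij⟩ := rep46 (n := m+1) (by omega) (by omega)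
      set c : ℂ := PowerSeries.coeff m (om φ₂ A B) / ((m:ℂ)+1) with hc
      refine ⟨A - c • M (i-1) j (i:ℂ), B - c • M i (j-1) (j:ℂ), ?_, ?_, ?_, ?_⟩
      all_goals rw [om_sub]
      · intro n hn
        rw [map_sub, PowerSeries.coeff_smul, smul_eq_mul]
        rcases Nat.lt_or_ge n m with h | h
        · rw [h1 n h, coeff_corr_lt H (by omega), mul_zero, sub_zero]
        · have : n = m := by omega
          subst this
          have hnz : ((n:ℂ)+1) ≠ 0 := Nat.cast_add_one_ne_zero n
          rw [coeff_corr_eq H (by omega), hc, div_mul_cancel₀ _ hnz, sub_self]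
      · intro n hn hn2
        rw [map_sub, PowerSeries.coeff_smul, smul_eq_mul,
          h2 n hn hn2, coeff_corr_odd H (Nat.odd_iff.2 (by omega)) (by omega), mul_zero, sub_zero]
      · intro n hn hle
        rw [map_sub, PowerSeries.coeff_smul, smul_eq_mul,
          h3 n hn hle, coeff_corr_lt H (by omega), mul_zero, sub_zero]
      · rw [map_sub, PowerSeries.coeff_smul, smul_eq_mul,
          h4, coeff_corr_odd H (Nat.odd_iff.2 (by omega)) (by omega), mul_zero, sub_zero]

/-- there exist forms of order `o + 4s + 3` -/
theorem exists_form (H : Hyp φ₂ o) (hoo : Odd o) (ho7 : 7 ≤ o)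
    (hao : PowerSeries.coeff o φ₂ ≠ 0) (s : ℕ) :
    ∃ A B : MvPowerSeries (Fin 2) ℂ, om φ₂ A B ≠ 0 ∧
      (om φ₂ A B).order = ((o + (4*s+3) : ℕ) : ℕ∞) := by
  obtain ⟨A, B, h1, _, _, h4⟩ := build H hoo ho7 hao s (o + (4*s+3)) le_rfl
  have hne : PowerSeries.coeff (o+(4*s+3)) (om φ₂ A B) ≠ 0 := by
    rw [h4]
    apply mul_ne_zero _ hao
    intro hcon
    have : (o:ℂ) = 6 := by linear_combination hcon / 2
    have : o = 6 := by exact_mod_cast this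
    omega
  refine ⟨A, B, fun hcon => hne (by rw [hcon]; simp), ?_⟩
  rw [PowerSeries.order_eq_nat]
  exact ⟨hne, h1⟩


-- the special series z = y^2 - x^3
noncomputable def Z : MvPowerSeries (Fin 2) ℂ := M 0 2 1 - M 3 0 1

theorem sub2_Z (H : Hyp φ₂ o) :
    sub2 ((X:PowerSeries ℂ)^4) φ₂ Z = φ₂^2 - ((X:PowerSeries ℂ)^4)^3 := by
  rw [Z, sub2_sub, sub2_M H, sub2_M H, one_smul, one_smul, pow_zero, one_mul, pow_zero, mul_one]

theorem Z_coeff_lt (H : Hyp φ₂ o) {n : ℕ} (hn : n < 12) :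
    PowerSeries.coeff n (sub2 ((X:PowerSeries ℂ)^4) φ₂ Z) = 0 := by
  rw [sub2_Z H, map_sub, ← pow_mul, PowerSeries.coeff_X_pow, if_neg (by omega),
    pow2_lt H 2 n (by omega), sub_zero]

theorem Z_coeff_12 (H : Hyp φ₂ o) :
    PowerSeries.coeff 12 (sub2 ((X:PowerSeries ℂ)^4) φ₂ Z) = 0 := by
  rw [sub2_Z H, map_sub, ← pow_mul, PowerSeries.coeff_X_pow, if_pos rfl]
  have := pow2_eq H 2
  norm_num at this ⊢
  rw [this]; ring

theorem Z_coeff_odd (H : Hyp φ₂ o) {n : ℕ} (hn : Odd n) (hlt : n < o + 6) :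
    PowerSeries.coeff n (sub2 ((X:PowerSeries ℂ)^4) φ₂ Z) = 0 := by
  rw [sub2_Z H, map_sub, ← pow_mul, PowerSeries.coeff_X_pow, if_neg, sub_zero]
  · have := mon_odd1 H 2 (by omega) 0 n hn (by omega)
    rwa [pow_zero, one_mul] at this
  · rcases hn with ⟨k, hk⟩; omega

theorem Z_coeff_top (H : Hyp φ₂ o) (hoo : Odd o) (ho7 : 7 ≤ o) :
    PowerSeries.coeff (o+6) (sub2 ((X:PowerSeries ℂ)^4) φ₂ Z)
      = 2 * PowerSeries.coeff o φ₂ := by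
  rw [sub2_Z H, map_sub, ← pow_mul, PowerSeries.coeff_X_pow, if_neg (by omega), sub_zero,
    pow_two, PowerSeries.coeff_mul]
  have hmem1 : ((6:ℕ), o) ∈ Finset.HasAntidiagonal.antidiagonal (o+6) := Finset.HasAntidiagonal.mem_antidiagonal.2 (by omega)
  rw [← Finset.add_sum_erase _ _ hmem1]
  have hmem2 : ((o:ℕ), 6) ∈ (Finset.HasAntidiagonal.antidiagonal (o+6)).erase (6, o) := by
    rw [Finset.mem_erase]
    exact ⟨by simp [Prod.ext_iff]; omega, Finset.HasAntidiagonal.mem_antidiagonal.2 (by omega)⟩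
  rw [← Finset.add_sum_erase _ _ hmem2]
  have hrest : ∀ p ∈ ((Finset.HasAntidiagonal.antidiagonal (o+6)).erase (6, o)).erase (o, 6),
      PowerSeries.coeff p.1 φ₂ * PowerSeries.coeff p.2 φ₂ = 0 := by
    rintro ⟨p, q⟩ hp
    rw [Finset.mem_erase, Finset.mem_erase, Finset.HasAntidiagonal.mem_antidiagonal] at hp
    obtain ⟨hne1, hne2, hpq⟩ := hp
    rcases Nat.even_or_odd p with hpe | hpo
    · -- p even, q odd
      have hqo : q % 2 = 1 := by
        rcases hpe with ⟨u, hu⟩; rcases hoo with ⟨w, hw⟩; omega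
      rcases lt_or_ge q o with h | h
      · rw [H.oddlow h (Nat.odd_iff.2 hqo), mul_zero]
      · have : p ≤ 6 := by omega
        have hp6 : p < 6 := by
          rcases Nat.eq_or_lt_of_le this with h' | h'
          · exfalso; apply hne2; rw [Prod.ext_iff]; constructor <;> simp <;> omega
          · exact h'
        rw [H.hlow p hp6, zero_mul]
    · have hpo' : p % 2 = 1 := Nat.odd_iff.1 hpo
      rcases lt_or_ge p o with h | h
      · rw [H.oddlow h hpo, zero_mul]
      · have : q ≤ 6 := by omega
        have hq6 : q < 6 := by
          rcases Nat.eq_or_lt_of_le this with h' | h'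
          · exfalso; apply hne1; rw [Prod.ext_iff]; constructor <;> simp <;> omega
          · exact h'
        rw [H.hlow q hq6, mul_zero]
  rw [Finset.sum_eq_zero hrest, add_zero, H.h6, one_mul, mul_one]
  ring

/-- build an element of the local ring with odd order `o+6` -/
theorem build2 (H : Hyp φ₂ o) (hoo : Odd o) (ho7 : 7 ≤ o) :
    ∀ m, m ≤ o + 6 → ∃ Hh : MvPowerSeries (Fin 2) ℂ,
      (∀ n < m, PowerSeries.coeff n (sub2 ((X:PowerSeries ℂ)^4) φ₂ Hh) = 0) ∧
      (∀ n < o + 6, n % 2 = 1 → PowerSeries.coeff n (sub2 ((X:PowerSeries ℂ)^4) φ₂ Hh) = 0) ∧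
      (∀ n ≤ 12, PowerSeries.coeff n (sub2 ((X:PowerSeries ℂ)^4) φ₂ Hh) = 0) ∧
      PowerSeries.coeff (o+6) (sub2 ((X:PowerSeries ℂ)^4) φ₂ Hh)
        = 2 * PowerSeries.coeff o φ₂ := by
  have ho2 : o % 2 = 1 := Nat.odd_iff.1 hoo
  have SO : ∀ n < o + 6, n % 2 = 1 →
      PowerSeries.coeff n (sub2 ((X:PowerSeries ℂ)^4) φ₂ Z) = 0 :=
    fun n hn h2 => Z_coeff_odd H (Nat.odd_iff.2 h2) hn
  have SL : ∀ n ≤ 12, PowerSeries.coeff n (sub2 ((X:PowerSeries ℂ)^4) φ₂ Z) = 0 := by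
    intro n hn
    rcases Nat.lt_or_ge n 12 with h | h
    · exact Z_coeff_lt H h
    · have : n = 12 := by omega
      subst this; exact Z_coeff_12 H
  intro m
  induction m with
  | zero => exact fun _ => ⟨Z, fun n hn => absurd hn (by omega), SO, SL, Z_coeff_top H hoo ho7⟩
  | succ m ih =>
    intro hm
    obtain ⟨Hh, h1, h2, h3, h4⟩ := ih (by omega)
    by_cases hz : PowerSeries.coeff m (sub2 ((X:PowerSeries ℂ)^4) φ₂ Hh) = 0
    · refine ⟨Hh, fun n hn => ?_, h2, h3, h4⟩
      rcases Nat.lt_or_ge n m with h | h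
      · exact h1 n h
      · have : n = m := by omega
        subst this; exact hz
    · have hme : m % 2 = 0 := by
        by_contra hc
        exact hz (h2 m (by omega) (by omega))
      have hm13 : 13 ≤ m := by
        by_contra hc
        exact hz (h3 m (by omega))
      obtain ⟨i, j, hij⟩ := rep46 (n := m) (by omega) (by omega)
      set c : ℂ := PowerSeries.coeff m (sub2 ((X:PowerSeries ℂ)^4) φ₂ Hh) with hcdef
      have key : ∀ n, PowerSeries.coeff n (sub2 ((X:PowerSeries ℂ)^4) φ₂ (Hh - c • M i j 1)) =
          PowerSeries.coeff n (sub2 ((X:PowerSeries ℂ)^4) φ₂ Hh) -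
          c * PowerSeries.coeff n (((X:PowerSeries ℂ)^4)^i * φ₂^j) := by
        intro n
        rw [sub2_sub, sub2_smul, map_sub, PowerSeries.coeff_smul, smul_eq_mul, sub2_M H, one_smul]
      refine ⟨Hh - c • M i j 1, fun n hn => ?_, fun n hn hn2 => ?_, fun n hn => ?_, ?_⟩
      · rw [key]
        rcases Nat.lt_or_ge n m with h | h
        · rw [h1 n h, mon_lt H (by omega), mul_zero, sub_zero]
        · have : n = m := by omega
          subst this
          rw [hij, mon_eq H, mul_one, hcdef, hij, sub_self]
      · rw [key, h2 n hn hn2]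
        rcases Nat.eq_zero_or_pos j with rfl | hj
        · rw [mon_odd0 (Nat.odd_iff.2 hn2), mul_zero, sub_zero]
        · rw [mon_odd1 H j hj i n (Nat.odd_iff.2 hn2) (by omega), mul_zero, sub_zero]
      · rw [key, h3 n hn, mon_lt H (by omega), mul_zero, sub_zero]
      · rw [key, h4]
        rcases Nat.eq_zero_or_pos j with rfl | hj
        · rw [mon_odd0 (Nat.odd_iff.2 (by omega)), mul_zero, sub_zero]
        · rw [mon_odd1 H j hj i (o+6) (Nat.odd_iff.2 (by omega)) (by omega), mul_zero, sub_zero]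

theorem o6_mem (H : Hyp φ₂ o) (hoo : Odd o) (ho7 : 7 ≤ o)
    (hao : PowerSeries.coeff o φ₂ ≠ 0) :
    ∃ Hh : MvPowerSeries (Fin 2) ℂ, sub2 ((X:PowerSeries ℂ)^4) φ₂ Hh ≠ 0 ∧
      (sub2 ((X:PowerSeries ℂ)^4) φ₂ Hh).order = ((o+6 : ℕ) : ℕ∞) := by
  obtain ⟨Hh, h1, _, _, h4⟩ := build2 H hoo ho7 (o+6) le_rfl
  have hne : PowerSeries.coeff (o+6) (sub2 ((X:PowerSeries ℂ)^4) φ₂ Hh) ≠ 0 := by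
    rw [h4]
    exact mul_ne_zero two_ne_zero hao
  refine ⟨Hh, fun hcon => hne (by rw [hcon]; simp), ?_⟩
  rw [PowerSeries.order_eq_nat]
  exact ⟨hne, h1⟩

/-- the coefficient of `T^6` in a substituted series picks out the `(0,1)` coefficient -/
theorem coeff6_sub2 (H : Hyp φ₂ o) (A : MvPowerSeries (Fin 2) ℂ) :
    PowerSeries.coeff 6 (sub2 ((X:PowerSeries ℂ)^4) φ₂ A) =
    MvPowerSeries.coeff (Finsupp.single 0 0 + Finsupp.single 1 1) A := by
  rw [coeff_sub2]
  rw [Finset.sum_eq_single ((0:ℕ), (1:ℕ))]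
  · rw [pow_zero, one_mul, pow_one, H.h6, mul_one]
  · rintro ⟨p1, p2⟩ hmem hne
    by_cases h46 : 6 < 4*p1 + 6*p2
    · rw [mon_lt H h46, mul_zero]
    · rcases Nat.eq_zero_or_pos p2 with rfl | hp2
      · rw [pow_zero, mul_one, ← pow_mul, PowerSeries.coeff_X_pow, if_neg (by omega), mul_zero]
      · exfalso; apply hne
        have : p2 = 1 ∧ p1 = 0 := by omega
        rw [Prod.ext_iff]
        exact ⟨this.2, this.1⟩
  · intro hmem
    exact absurd (Finset.mem_product.2 ⟨Finset.mem_range.2 (by omega),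
      Finset.mem_range.2 (by omega)⟩) hmem

/-- coefficient at an odd spot `w` with `o ≤ w ≤ o+2` -/
theorem sub2_odd_coeff (H : Hyp φ₂ o) (ho7 : 7 ≤ o) (A : MvPowerSeries (Fin 2) ℂ)
    {w : ℕ} (hw : Odd w) (h1 : o ≤ w) (h2 : w ≤ o + 2) :
    PowerSeries.coeff w (sub2 ((X:PowerSeries ℂ)^4) φ₂ A) =
    MvPowerSeries.coeff (Finsupp.single 0 0 + Finsupp.single 1 1) A *
      PowerSeries.coeff w φ₂ := by
  rw [coeff_sub2]
  rw [Finset.sum_eq_single ((0:ℕ), (1:ℕ))]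
  · rw [pow_zero, one_mul, pow_one]
  · rintro ⟨p1, p2⟩ hmem hne
    rcases Nat.eq_zero_or_pos p2 with rfl | hp2
    · rw [pow_zero, mul_one, ← pow_mul, PowerSeries.coeff_X_pow, if_neg, mul_zero]
      rcases hw with ⟨k, hk⟩; omega
    · have h10 : 10 ≤ 4*p1 + 6*p2 := by
        rcases Nat.lt_or_ge p2 2 with hp | hp
        · have : p2 = 1 := by omega
          subst this
          have : 1 ≤ p1 := by
            by_contra hc
            exact hne (by rw [Prod.ext_iff]; exact ⟨by omega, rfl⟩)
          omega
        · omega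
      rw [mon_odd1 H p2 hp2 p1 w hw (by omega), mul_zero]
  · intro hmem
    exact absurd (Finset.mem_product.2 ⟨Finset.mem_range.2 (by omega),
      Finset.mem_range.2 (by omega)⟩) hmem


end LamGam

/-- If a parameterization `(T⁴, T⁶ + ∑_{i≥7} aᵢTⁱ)` has value semigroup `⟨4, 6, v₂⟩`
with `v₂ > 12` odd, then `Λ \ Γ = {v₂ - 2, v₂ + 2}`. -/
theorem lambda_minus_gamma_4_6_v2 (a : ℕ → ℂ) (φ₁ φ₂ : PowerSeries ℂ)
    (hφ₁ : φ₁ = PowerSeries.X ^ 4)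
    (hφ₂ : φ₂ = PowerSeries.mk fun n => if n = 6 then 1 else if 7 ≤ n then a n else 0)
    (v2 : ℕ) (h12 : 12 < v2) (hodd : Odd v2)
    (hΓ : valueSemigroup φ₁ φ₂ = (AddSubmonoid.closure ({4, 6, v2} : Set ℕ) : Set ℕ)) :
    diffValues φ₁ φ₂ \ valueSemigroup φ₁ φ₂ = {v2 - 2, v2 + 2} := by
  subst hφ₁ hφ₂
  set φ₂ : PowerSeries ℂ :=
    (PowerSeries.mk fun n => if n = 6 then 1 else if 7 ≤ n then a n else 0 : PowerSeries ℂ)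
    with hphi
  have b6 : PowerSeries.coeff 6 φ₂ = 1 := by
    rw [hphi, PowerSeries.coeff_mk, if_pos rfl]
  have blow : ∀ n < 6, PowerSeries.coeff n φ₂ = 0 := by
    intro n hn
    rw [hphi, PowerSeries.coeff_mk, if_neg (by omega), if_neg (by omega)]
  have hodd2 : v2 % 2 = 1 := Nat.odd_iff.1 hodd
  -- an element of the value semigroup with odd order v2
  have hv2Γ : v2 ∈ valueSemigroup (PowerSeries.X ^ 4) φ₂ := by
    rw [hΓ]
    exact AddSubmonoid.subset_closure (by simp)
  obtain ⟨Hv, hvne, hvord⟩ := hv2Γ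
  rw [PowerSeries.order_eq_nat] at hvord
  -- existence of an odd nonvanishing coefficient of φ₂
  have hex : ∃ n, Odd n ∧ PowerSeries.coeff n φ₂ ≠ 0 := by
    by_contra hno
    push_neg at hno
    have H' : LamGam.Hyp φ₂ (v2 + 1) :=
      ⟨b6, blow, fun n _ hn => by
        by_contra hc
        exact hc (hno n hn)⟩
    exact hvord.1 (LamGam.sub2_odd H' Hv hodd (by omega))
  classical
  set o := Nat.find hex with hodef
  obtain ⟨hoo, hao⟩ : Odd o ∧ PowerSeries.coeff o φ₂ ≠ 0 := Nat.find_spec hex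
  have H : LamGam.Hyp φ₂ o :=
    ⟨b6, blow, fun n hn hodd' => by
      by_contra hc
      exact Nat.find_min hex hn ⟨hodd', hc⟩⟩
  have ho7 : 7 ≤ o := by
    by_contra hc
    have hlt : o < 6 := by rcases hoo with ⟨k, hk⟩; omega
    exact hao (blow o hlt)
  have ho2 : o % 2 = 1 := Nat.odd_iff.1 hoo
  -- o + 6 belongs to the value semigroup, hence to the numerical semigroup
  obtain ⟨Hz, hzne, hzord⟩ := LamGam.o6_mem H hoo ho7 hao
  have ho6cl : (o + 6) ∈ AddSubmonoid.closure ({4, 6, v2} : Set ℕ) := by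
    have hmem : (o + 6) ∈ valueSemigroup (PowerSeries.X ^ 4) φ₂ := ⟨Hz, hzne, hzord⟩
    rw [hΓ] at hmem
    exact hmem
  have ho6SP := LamGam.mem_SP h12 hodd2 ho6cl
  have hv2le : v2 ≤ o + 6 ∧ o + 6 ≠ v2 + 2 := by
    rcases ho6SP with ⟨he, _⟩ | ⟨_, h⟩
    · omega
    · exact h
  have hov2 : o ≤ v2 := by
    by_contra hc
    exact hvord.1 (LamGam.sub2_odd H Hv hodd (by omega))
  have hc01 : MvPowerSeries.coeff (Finsupp.single 0 0 + Finsupp.single 1 1) Hv = 0 := by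
    rw [← LamGam.coeff6_sub2 H Hv]
    exact hvord.2 6 (by omega)
  have hv2no : v2 ≠ o := by
    intro h
    exact hvord.1 (by
      rw [LamGam.sub2_odd_coeff H ho7 Hv hodd (by omega) (by omega), hc01, zero_mul])
  have hv2no2 : v2 ≠ o + 2 := by
    intro h
    exact hvord.1 (by
      rw [LamGam.sub2_odd_coeff H ho7 Hv hodd (by omega) (by omega), hc01, zero_mul])
  have hv2eq : v2 = o + 6 := by omega
  -- the set equality
  ext n
  simp only [Set.mem_diff, Set.mem_insert_iff, Set.mem_singleton_iff]
  constructor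
  · rintro ⟨⟨A, B, hne, hord⟩, hnot⟩
    rw [hΓ] at hnot
    have hne' : LamGam.om φ₂ A B ≠ 0 := hne
    have hord' : (LamGam.om φ₂ A B).order + 1 = (n : ℕ∞) := hord
    have hfin : (LamGam.om φ₂ A B).order ≠ ⊤ := by
      intro h
      rw [h] at hord'
      simp at hord'
    obtain ⟨m, hm0⟩ := WithTop.ne_top_iff_exists.1 hfin
    have hm : (LamGam.om φ₂ A B).order = (m : ℕ∞) := by exact_mod_cast hm0.symm
    have hmn : m + 1 = n := by
      have h2 : ((m : ℕ∞)) + 1 = (n : ℕ∞) := by rw [← hm]; exact hord'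
      exact_mod_cast h2
    rcases Nat.even_or_odd n with hne2 | hno2
    · exfalso
      have hn2 : n % 2 = 0 := Nat.even_iff.1 hne2
      rcases Nat.lt_or_ge n 4 with h4 | h4
      · -- n is 0 or 2 ; n = 0 impossible, n = 2 gives order 1
        have : n = 2 := by omega
        subst this
        have hm1 : m = 1 := by omega
        apply LamGam.om_order_ne_one A B H
        rw [hm, hm1]
        norm_num
      · exact hnot (LamGam.mem_closure_even hn2 h4)
    · have hmeven : Even m := by
        rcases hno2 with ⟨k, hk⟩
        exact ⟨m / 2, by omega⟩
      have hge : o + 3 ≤ m := LamGam.om_order_even_ge A B H hoo hmeven hm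
      have hn21 : n % 2 = 1 := Nat.odd_iff.1 hno2
      by_contra hcon
      push_neg at hcon
      apply hnot
      exact LamGam.mem_closure_odd hodd2 (Nat.odd_iff.1 hno2) (by omega) (by omega)
  · have hnotmem : ∀ w : ℕ, w % 2 = 1 → w < v2 ∨ w = v2 + 2 →
        w ∉ valueSemigroup (PowerSeries.X ^ 4) φ₂ := by
      intro w hw hwlt hmem
      rw [hΓ] at hmem
      have := LamGam.mem_SP h12 hodd2 hmem
      omega
    rintro (rfl | rfl)
    · refine ⟨?_, hnotmem _ (by omega) (by omega)⟩
      obtain ⟨A, B, hne, hord⟩ := LamGam.exists_form H hoo ho7 hao 0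
      refine ⟨A, B, hne, ?_⟩
      show (LamGam.om φ₂ A B).order + 1 = _
      rw [hord]
      have he : o + (4*0+3) + 1 = v2 - 2 := by omega
      rw [← he]
      push_cast
      rfl
    · refine ⟨?_, hnotmem _ (by omega) (by omega)⟩
      obtain ⟨A, B, hne, hord⟩ := LamGam.exists_form H hoo ho7 hao 1
      refine ⟨A, B, hne, ?_⟩
      show (LamGam.om φ₂ A B).order + 1 = _
      rw [hord]
      have he : o + (4*1+3) + 1 = v2 + 2 := by omega
      rw [← he]
      push_cast
      rfl
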